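/- Let n ∈ ℕ, N = 2^n, G = F^{⊗n}, let H be an N×N matrix over 𝔽₂, and let 𝒜ᶜ ⊆ {0,…,N−1}. Suppose u ∈ 𝔽₂^N satisfies u·H = 0 and set x = u·G. Let ℓ ∈ {0,…,N−2} and let ū ∈ 𝔽₂^{ℓ+1} be any vector with ū_j = u_j for all j ≤ ℓ. Then ū·H_{0:ℓ, ℒ_{ℓ+1}} + x·Q^{(ℓ+1)} = 0 over 𝔽₂, where Q^{(ℓ+1)} = G_{*, ℓ+1:N−1}·H_{ℓ+1:N−1, ℒ_{ℓ+1}}. -/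

import Mathlib

open Matrix Finset

/-- The 2×2 polarization kernel `F = [[1,0],[1,1]]` over `𝔽₂`. -/
def polarF : Matrix (Fin 2) (Fin 2) (ZMod 2) := !![1, 0; 1, 1]

/-- The `n`-th Kronecker power `F^{⊗n}` of the polarization kernel, a `2^n × 2^n`
matrix over `𝔽₂`. -/
def kronPow : (n : ℕ) → Matrix (Fin (2 ^ n)) (Fin (2 ^ n)) (ZMod 2)
  | 0 => 1
  | n + 1 =>
      Matrix.reindex (finProdFinEquiv.trans (finCongr (by ring)))
        (finProdFinEquiv.trans (finCongr (by ring)))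
        (Matrix.kroneckerMap (· * ·) polarF (kronPow n))

lemma polarF_mul_self : polarF * polarF = 1 := by
  decide

lemma kronPow_mul_self (n : ℕ) : kronPow n * kronPow n = 1 := by
  induction n with
  | zero => simp [kronPow]
  | succ n ih =>
    show (Matrix.kroneckerMap (· * ·) polarF (kronPow n)).submatrix _ _ *
        (Matrix.kroneckerMap (· * ·) polarF (kronPow n)).submatrix _ _ = 1
    rw [Matrix.submatrix_mul_equiv, ← Matrix.mul_kronecker_mul, polarF_mul_self, ih,
      Matrix.one_kronecker_one]
    exact Matrix.submatrix_one_equiv _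

/-- **Corollary 1 (FC conversion for SCC decoding).**  Let `N = 2^n`, `G = F^{⊗n}`,
`H` an `N × N` matrix over `𝔽₂`, and `Ac ⊆ {0,…,N−1}` the constrained positions.
Suppose `u·H = 0` and `x = u·G`.  Let `ℓ ∈ {0,…,N−2}` and let `ū` (a hypothesis
vector of length `ℓ+1`) agree with `u` on all positions `j ≤ ℓ`.  Then for every
future constraint index `j ∈ ℒ_{ℓ+1} = {k ∈ Ac : k ≥ ℓ+1}`,
`(ū·H_{0:ℓ,ℒ_{ℓ+1}})_j + (x·Q^{(ℓ+1)})_j = 0`, where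
`Q^{(ℓ+1)} = G_{*,ℓ+1:N−1}·H_{ℓ+1:N−1,ℒ_{ℓ+1}}`; entrywise,
`Σ_{k≤ℓ} ū_k·H_{k,j} + Σ_m x_m · (Σ_{k≥ℓ+1} G_{m,k}·H_{k,j}) = 0`. -/
theorem scc_FC_conversion (n : ℕ) (H : Matrix (Fin (2 ^ n)) (Fin (2 ^ n)) (ZMod 2))
    (Ac : Finset (Fin (2 ^ n)))
    (u : Fin (2 ^ n) → ZMod 2) (hu : Matrix.vecMul u H = 0)
    (x : Fin (2 ^ n) → ZMod 2) (hx : x = Matrix.vecMul u (kronPow n))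
    (ℓ : ℕ) (hℓ : ℓ + 1 < 2 ^ n)
    (ubar : Fin (2 ^ n) → ZMod 2)
    (hubar : ∀ j : Fin (2 ^ n), (j : ℕ) ≤ ℓ → ubar j = u j) :
    ∀ j ∈ Ac, ℓ + 1 ≤ (j : ℕ) →
      (∑ k ∈ Finset.univ.filter (fun k : Fin (2 ^ n) => (k : ℕ) ≤ ℓ), ubar k * H k j)
        + (∑ m : Fin (2 ^ n), x m *
            ∑ k ∈ Finset.univ.filter (fun k : Fin (2 ^ n) => ℓ + 1 ≤ (k : ℕ)),
              kronPow n m k * H k j) = 0 := by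
  intro j _ _
  have hxG : ∀ k, ∑ m, x m * kronPow n m k = u k := by
    intro k
    have : Matrix.vecMul x (kronPow n) = u := by
      rw [hx, Matrix.vecMul_vecMul, kronPow_mul_self, Matrix.vecMul_one]
    have h := congrFun this k
    simpa [Matrix.vecMul, dotProduct] using h
  have h2 : (∑ m : Fin (2 ^ n), x m *
      ∑ k ∈ Finset.univ.filter (fun k : Fin (2 ^ n) => ℓ + 1 ≤ (k : ℕ)),
        kronPow n m k * H k j)
      = ∑ k ∈ Finset.univ.filter (fun k : Fin (2 ^ n) => ℓ + 1 ≤ (k : ℕ)), u k * H k j := by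
    simp_rw [Finset.mul_sum]
    rw [Finset.sum_comm]
    refine Finset.sum_congr rfl fun k _ => ?_
    rw [← hxG k, Finset.sum_mul]
    exact Finset.sum_congr rfl fun m _ => by ring
  rw [h2]
  have h1 : (∑ k ∈ Finset.univ.filter (fun k : Fin (2 ^ n) => (k : ℕ) ≤ ℓ), ubar k * H k j)
      = ∑ k ∈ Finset.univ.filter (fun k : Fin (2 ^ n) => (k : ℕ) ≤ ℓ), u k * H k j := by
    refine Finset.sum_congr rfl fun k hk => ?_
    rw [hubar k (by simpa using hk)]
  rw [h1]
  have hfilt : (Finset.univ.filter (fun k : Fin (2 ^ n) => ℓ + 1 ≤ (k : ℕ)))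
      = Finset.univ.filter (fun k : Fin (2 ^ n) => ¬ (k : ℕ) ≤ ℓ) := by
    refine Finset.filter_congr fun k _ => ?_
    omega
  rw [hfilt, Finset.sum_filter_add_sum_filter_not]
  have h := congrFun hu j
  simpa [Matrix.vecMul, dotProduct] using h
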